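/- Let (X, E) be a coarse space, A(X) the free abelian group of exponent p on X, and for symmetric ε ∈ E let Y_ε = {x − y : (x,y) ∈ ε}. If x, y ∈ X and x − y belongs to the n-fold sumset Y_{n,ε}, then (x, y) ∈ ε^n (the n-fold composition of ε). -/

import Mathlib

/-- A coarse structure on `X`. -/
def IsCoarseStructure {X : Type*} (E : Set (Set (X × X))) : Prop :=
  (∀ ε ∈ E, ∀ x : X, (x, x) ∈ ε) ∧
  (∀ ε ∈ E, ∀ δ ∈ E, {p : X × X | ∃ z : X, (p.1, z) ∈ ε ∧ (z, p.2) ∈ δ} ∈ E) ∧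
  (∀ ε ∈ E, {p : X × X | (p.2, p.1) ∈ ε} ∈ E) ∧
  (∀ ε ∈ E, ∀ ε' ⊆ ε, (∀ x : X, (x, x) ∈ ε') → ε' ∈ E)

/-- Connectedness: any two points are related by some entourage. -/
def IsConnectedCoarse {X : Type*} (E : Set (Set (X × X))) : Prop :=
  ∀ x y : X, ∃ ε ∈ E, (x, y) ∈ ε

/-- The `n`-fold sumset of `S` in an additive commutative group. -/
def nSumset {A : Type*} [AddCommGroup A] (S : Set A) (n : ℕ) : Set A :=
  {a | ∃ f : Fin n → A, (∀ i, f i ∈ S) ∧ a = ∑ i, f i}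

/-- The set `Y_ε = {x − y : (x, y) ∈ ε}` of differences of generators of the free
abelian group `A(X) = ⊕_{x ∈ X} ℤ/p` of exponent `p` on `X`. -/
def Yset {X : Type*} (p : ℕ) (ε : Set (X × X)) : Set (X →₀ ZMod p) :=
  {a | ∃ q ∈ ε, a = Finsupp.single q.1 (1 : ZMod p) - Finsupp.single q.2 (1 : ZMod p)}

/-- The coefficient-sum homomorphism `A(X) → ℤ/p`. -/
noncomputable def coeffSum (X : Type*) (p : ℕ) : (X →₀ ZMod p) →+ ZMod p :=
  Finsupp.liftAddHom fun _ : X => AddMonoidHom.id (ZMod p)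

/-- The `n`-fold composition `ε ∘ ε ∘ ... ∘ ε` (with `ε^0` the diagonal). -/
def compPow {X : Type*} (ε : Set (X × X)) : ℕ → Set (X × X)
  | 0 => {p | p.1 = p.2}
  | n + 1 => {p | ∃ z : X, (p.1, z) ∈ ε ∧ (z, p.2) ∈ compPow ε n}

open Relation

section Aux
variable {X : Type*}

def edgeRel {n : ℕ} (f : Fin n → X × X) : X → X → Prop :=
  fun u v => ∃ i, f i = (u, v) ∨ f i = (v, u)

lemma edgeRel_symm {n : ℕ} (f : Fin n → X × X) : Symmetric (edgeRel f) := by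
  rintro u v ⟨i, h | h⟩
  · exact ⟨i, Or.inr h⟩
  · exact ⟨i, Or.inl h⟩

lemma diag_mem_compPow (ε : Set (X × X)) (hdiag : ∀ x : X, (x, x) ∈ ε) :
    ∀ n (x : X), (x, x) ∈ compPow ε n
  | 0, _ => rfl
  | n+1, x => ⟨x, hdiag x, diag_mem_compPow ε hdiag n x⟩

lemma compPow_mono (ε : Set (X × X)) (hdiag : ∀ x : X, (x, x) ∈ ε) :
    ∀ n, ∀ q ∈ compPow ε n, q ∈ compPow ε (n+1)
  | 0, q, hq => by
      obtain ⟨x, y⟩ := q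
      have hxy : x = y := hq
      subst hxy
      exact ⟨x, hdiag x, rfl⟩
  | n+1, q, hq => by
      obtain ⟨z, hz1, hz2⟩ := hq
      exact ⟨z, hz1, compPow_mono ε hdiag n _ hz2⟩

lemma reach_mem_compPow (ε : Set (X × X)) (hdiag : ∀ x : X, (x, x) ∈ ε)
    (hsym : ∀ q : X × X, q ∈ ε ↔ (q.2, q.1) ∈ ε) :
    ∀ n (f : Fin n → X × X), (∀ i, f i ∈ ε) →
      ∀ x y, ReflTransGen (edgeRel f) x y → (x, y) ∈ compPow ε n := by
  intro n
  induction n with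
  | zero =>
    intro f _ x y h
    induction h with
    | refl => rfl
    | tail _ hr _ => exact absurd hr (by rintro ⟨i, _⟩; exact i.elim0)
  | succ n ih =>
    intro f hf x y h
    rcases Relation.ReflTransGen.cases_head h with heq | ⟨z, hxz, hzy⟩
    · subst heq; exact diag_mem_compPow ε hdiag _ _
    obtain ⟨i, hi⟩ := hxz
    set f' : Fin n → X × X := f ∘ i.succAbove with hf'def
    have hf'e : ∀ j, f' j ∈ ε := fun j => hf _
    have hsub : ∀ u v, edgeRel f u v →
        edgeRel f' u v ∨ ((u, v) = (x, z) ∨ (u, v) = (z, x)) := by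
      rintro u v ⟨j, hj⟩
      by_cases hji : j = i
      · subst hji
        right
        rcases hj with h1 | h1 <;> rcases hi with h2 | h2 <;>
          [skip; skip; skip; skip] <;>
          · rw [h1] at h2
            simp only [Prod.mk.injEq] at h2
            obtain ⟨hA, hB⟩ := h2
            subst hA; subst hB; simp
      · obtain ⟨k, hk⟩ := Fin.exists_succAbove_eq hji
        refine Or.inl ⟨k, ?_⟩
        show f (i.succAbove k) = _ ∨ f (i.succAbove k) = _
        rw [hk]; exact hj
    have Esymm : Symmetric (ReflTransGen (edgeRel f')) :=
      fun a b hab => (@Relation.ReflTransGen.symmetric _ _ ⟨edgeRel_symm f'⟩).symm a b hab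
    have key : ∀ u, ReflTransGen (edgeRel f) u y →
        ReflTransGen (edgeRel f') u y ∨
        (ReflTransGen (edgeRel f') u x ∧ ReflTransGen (edgeRel f') z y) ∨
        (ReflTransGen (edgeRel f') u z ∧ ReflTransGen (edgeRel f') x y) := by
      intro u hu
      induction hu using Relation.ReflTransGen.head_induction_on with
      | refl => exact Or.inl ReflTransGen.refl
      | head hr _ ihw =>
        rename_i a c _
        rcases hsub _ _ hr with hr' | hpair
        · have hac : ReflTransGen (edgeRel f') a c := ReflTransGen.single hr'
          rcases ihw with h1 | ⟨h1, h2⟩ | ⟨h1, h2⟩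
          · exact Or.inl (hac.trans h1)
          · exact Or.inr (Or.inl ⟨hac.trans h1, h2⟩)
          · exact Or.inr (Or.inr ⟨hac.trans h1, h2⟩)
        · rcases hpair with hp | hp <;>
            (simp only [Prod.mk.injEq] at hp; obtain ⟨ha, hc⟩ := hp; subst ha; subst hc)
          · -- a = x, c = z
            rcases ihw with h1 | ⟨h1, h2⟩ | ⟨h1, h2⟩
            · exact Or.inr (Or.inl ⟨ReflTransGen.refl, h1⟩)
            · exact Or.inl ((Esymm h1).trans h2)
            · exact Or.inl h2
          · -- a = z, c = x
            rcases ihw with h1 | ⟨h1, h2⟩ | ⟨h1, h2⟩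
            · exact Or.inr (Or.inr ⟨ReflTransGen.refl, h1⟩)
            · exact Or.inl h2
            · exact Or.inl ((Esymm h1).trans h2)
    have hxz' : (x, z) ∈ ε := by
      rcases hi with h2 | h2
      · exact h2 ▸ hf i
      · have := hf i; rw [h2] at this; exact (hsym (z, x)).1 this
    rcases key z hzy with h1 | ⟨h1, h2⟩ | ⟨h1, h2⟩
    · exact ⟨z, hxz', ih f' hf'e z y h1⟩
    · exact ⟨z, hxz', ih f' hf'e z y h2⟩
    · exact compPow_mono ε hdiag n _ (ih f' hf'e x y h2)

lemma rtg_of_sum_eq (p : ℕ) [Fact p.Prime] {n : ℕ} (f : Fin n → X × X)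
    (x y : X)
    (heq : Finsupp.single x (1 : ZMod p) - Finsupp.single y (1 : ZMod p) =
      ∑ i, (Finsupp.single (f i).1 (1 : ZMod p) - Finsupp.single (f i).2 (1 : ZMod p))) :
    ReflTransGen (edgeRel f) x y := by
  classical
  by_contra hny
  set S : Set X := {w | ReflTransGen (edgeRel f) x w} with hS
  let φ : (X →₀ ZMod p) →+ ZMod p :=
    Finsupp.liftAddHom (fun z => if z ∈ S then AddMonoidHom.id (ZMod p) else 0)
  have hφ : ∀ (z : X) (c : ZMod p), φ (Finsupp.single z c) = if z ∈ S then c else 0 := by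
    intro z c
    simp only [φ, Finsupp.liftAddHom_apply_single]
    split <;> simp
  have h1 : φ (Finsupp.single x (1 : ZMod p) - Finsupp.single y 1) = 1 := by
    rw [map_sub, hφ, hφ, if_pos (show x ∈ S from ReflTransGen.refl), if_neg (show y ∉ S from hny), sub_zero]
  have h2 : φ (∑ i, (Finsupp.single (f i).1 (1 : ZMod p) - Finsupp.single (f i).2 1)) = 0 := by
    rw [map_sum]
    refine Finset.sum_eq_zero fun i _ => ?_
    rw [map_sub, hφ, hφ]
    have hiff : (f i).1 ∈ S ↔ (f i).2 ∈ S := by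
      constructor
      · intro h; exact h.tail ⟨i, Or.inl rfl⟩
      · intro h; exact h.tail ⟨i, Or.inr rfl⟩
    by_cases hmem : (f i).1 ∈ S
    · rw [if_pos hmem, if_pos (hiff.1 hmem), sub_self]
    · rw [if_neg hmem, if_neg (fun hh => hmem (hiff.2 hh)), sub_self]
  rw [heq, h2] at h1
  exact one_ne_zero h1.symm

end Aux


/-- If `x − y` belongs to the `n`-fold sumset `Y_{n,ε}` in `A(X) = ⊕_{x∈X} ℤ/p`,
then `(x, y) ∈ ε^n`. -/
theorem mem_compPow_of_diff_mem_sumset {X : Type*} (p : ℕ) [Fact p.Prime]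
    (ε : Set (X × X)) (hdiag : ∀ x : X, (x, x) ∈ ε)
    (hsym : ∀ q : X × X, q ∈ ε ↔ (q.2, q.1) ∈ ε)
    (n : ℕ) (x y : X)
    (h : Finsupp.single x (1 : ZMod p) - Finsupp.single y (1 : ZMod p) ∈
      nSumset (Yset p ε) n) :
    (x, y) ∈ compPow ε n := by
  obtain ⟨F, hF, heq⟩ := h
  choose g hgε hFg using hF
  have heq2 : Finsupp.single x (1 : ZMod p) - Finsupp.single y (1 : ZMod p) =
      ∑ i, (Finsupp.single (g i).1 (1 : ZMod p) - Finsupp.single (g i).2 (1 : ZMod p)) := by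
    rw [heq]
    exact Finset.sum_congr rfl fun i _ => hFg i
  exact reach_mem_compPow ε hdiag hsym n g hgε x y (rtg_of_sum_eq p g x y heq2)
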